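/- The Laplace mechanism κ(D) = f(D) + Lap(Δf/ε), where Lap(b) denotes Laplace noise with scale b and Δf is the ℓ₁ global sensitivity of f, satisfies ε-differential privacy. -/

import Mathlib

open MeasureTheory

def DP {D Ω : Type*} [MeasurableSpace Ω] (neighbor : D → D → Prop)
    (κ : D → Measure Ω) (ε : ℝ) : Prop :=
  ∀ d₁ d₂, neighbor d₁ d₂ → ∀ S : Set Ω, MeasurableSet S →
    κ d₁ S ≤ ENNReal.ofReal (Real.exp ε) * κ d₂ S

/-- The Laplace mechanism `κ(D) = f(D) + Lap(Δf/ε)`, realized as the measure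
whose density at `x` is the Laplace density with scale `b = Δf/ε` centered at
`f(D)`, satisfies ε-differential privacy. -/
theorem laplace_mechanism_dp {D : Type*} (neighbor : D → D → Prop)
    (f : D → ℝ) (ε Δf : ℝ) (hε : 0 < ε) (hΔf : 0 < Δf)
    (hsens : ∀ d₁ d₂, neighbor d₁ d₂ → |f d₁ - f d₂| ≤ Δf) :
    DP neighbor
      (fun d => volume.withDensity fun x =>
        ENNReal.ofReal ((1 / (2 * (Δf / ε))) * Real.exp (-|x - f d| / (Δf / ε))))
      ε := by
  intro d₁ d₂ hnb S hS
  set b : ℝ := Δf / ε with hb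
  have hbpos : 0 < b := div_pos hΔf hε
  simp only [withDensity_apply _ hS]
  have key : ∀ x : ℝ,
      ENNReal.ofReal ((1 / (2 * b)) * Real.exp (-|x - f d₁| / b))
        ≤ ENNReal.ofReal (Real.exp ε) *
          ENNReal.ofReal ((1 / (2 * b)) * Real.exp (-|x - f d₂| / b)) := by
    intro x
    rw [← ENNReal.ofReal_mul (Real.exp_nonneg ε)]
    apply ENNReal.ofReal_le_ofReal
    have h1 : Real.exp ε * ((1 / (2 * b)) * Real.exp (-|x - f d₂| / b))
        = (1 / (2 * b)) * Real.exp (ε + -|x - f d₂| / b) := by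
      rw [Real.exp_add]; ring
    rw [h1]
    apply mul_le_mul_of_nonneg_left _ (by positivity)
    apply Real.exp_le_exp.mpr
    have hεb : ε * b = Δf := by
      rw [hb]; field_simp
    have habs : |x - f d₂| - |x - f d₁| ≤ Δf := by
      calc |x - f d₂| - |x - f d₁| ≤ |(x - f d₂) - (x - f d₁)| :=
            abs_sub_abs_le_abs_sub _ _
        _ = |f d₁ - f d₂| := by ring_nf
        _ ≤ Δf := hsens d₁ d₂ hnb
    have h2 : (|x - f d₂| - |x - f d₁|) / b ≤ ε := by
      rw [div_le_iff₀ hbpos]; linarith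
    have h3 : (|x - f d₂| - |x - f d₁|) / b = |x - f d₂| / b - |x - f d₁| / b :=
      sub_div _ _ _
    have h4 : -|x - f d₁| / b = -(|x - f d₁| / b) := neg_div _ _
    have h5 : -|x - f d₂| / b = -(|x - f d₂| / b) := neg_div _ _
    linarith
  calc (∫⁻ x in S, ENNReal.ofReal ((1 / (2 * b)) * Real.exp (-|x - f d₁| / b)))
      ≤ ∫⁻ x in S, ENNReal.ofReal (Real.exp ε) *
          ENNReal.ofReal ((1 / (2 * b)) * Real.exp (-|x - f d₂| / b)) :=
        lintegral_mono fun x => key x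
    _ = ENNReal.ofReal (Real.exp ε) *
          ∫⁻ x in S, ENNReal.ofReal ((1 / (2 * b)) * Real.exp (-|x - f d₂| / b)) :=
        lintegral_const_mul' _ _ ENNReal.ofReal_ne_top
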